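/- Equivalence of AccMut and split-stream execution (Theorem 1): for every fuel bound n, every finite set I ⊆ M, every mutant ID i ∈ I, and every state s, accRun n I s i = ssRun n I s i; that is, AccMut and split-stream execution record exactly the same final state for every mutant and hence the same sequence of save(s, i) invocations. -/
import Mathlib


/-- A variant at a location: a code block together with the set of mutant IDs
for which this variant is enabled. -/
structure Variant (C ID : Type) where
  code : C
  I : Finset ID
deriving DecidableEq

/-- A mutation model: a finite set `M` of all mutant IDs and a mutation procedure `p`
assigning to each location a finite set of variants, such that ID sets of distinct
variants at a location are pairwise disjoint and their union is `M`. -/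
structure MutModel (L C ID : Type) [DecidableEq C] [DecidableEq ID] where
  M : Finset ID
  p : L → Finset (Variant C ID)
  subset_M : ∀ l : L, ∀ v ∈ p l, v.I ⊆ M
  disj : ∀ l : L, ∀ v ∈ p l, ∀ w ∈ p l, v ≠ w → Disjoint v.I w.I
  cover : ∀ l : L, (p l).biUnion (fun v => v.I) = M

section Runs

variable {L C ID S : Type} [DecidableEq C] [DecidableEq ID] [DecidableEq S]

/-- The standard step of mutant `i` at state `s`: if `φ s = some l`, execute the
code of the unique variant in `p l` enabled for `i`; at a terminated state
(`φ s = none`) the state is left unchanged. -/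
noncomputable def step (m : MutModel L C ID) (φ : S → Option L) (execute : S → C → S)
    (i : ID) (s : S) : S :=
  match φ s with
  | none => s
  | some l => if h : ∃ v ∈ m.p l, i ∈ v.I then execute s h.choose.code else s

/-- The standard mutation-analysis run of mutant `i` for `n` steps. -/
noncomputable def stdRun (m : MutModel L C ID) (φ : S → Option L) (execute : S → C → S) :
    ℕ → ID → S → S
  | 0, _, s => s
  | n + 1, i, s =>
    match φ s with
    | none => s
    | some _ => stdRun m φ execute n i (step m φ execute i s)

/-- The AccMut run: a process representing the mutant IDs `I` advances, for the
mutant `i`, by clustering `I` into the equivalence class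
`K = {j ∈ I : step j s = step i s}` of `i` modulo the state `s` and applying the
change of an arbitrary representative `rep K` of the class. -/
noncomputable def accRun (m : MutModel L C ID) (φ : S → Option L) (execute : S → C → S)
    (rep : Finset ID → ID) : ℕ → Finset ID → S → ID → S
  | 0, _, s, _ => s
  | n + 1, I, s, i =>
    match φ s with
    | none => s
    | some _ =>
      accRun m φ execute rep n
        (I.filter fun j => step m φ execute j s = step m φ execute i s)
        (step m φ execute
          (rep (I.filter fun j => step m φ execute j s = step m φ execute i s)) s) i

/-- The split-stream run: the process splits into one child per enabled variant;
the child containing mutant `i` represents `I ∩ v.I` for the unique variant `v`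
at location `φ s` with `i ∈ v.I`, and its state advances by executing `v.code`. -/
noncomputable def ssRun (m : MutModel L C ID) (φ : S → Option L) (execute : S → C → S) :
    ℕ → Finset ID → S → ID → S
  | 0, _, s, _ => s
  | n + 1, I, s, i =>
    match φ s with
    | none => s
    | some l =>
      if h : ∃ v ∈ m.p l, i ∈ v.I then
        ssRun m φ execute n (I ∩ h.choose.I) (execute s h.choose.code) i
      else s

lemma ssRun_indep (m : MutModel L C ID) (φ : S → Option L) (execute : S → C → S) :
    ∀ (n : ℕ) (I J : Finset ID) (s : S) (i : ID),
      ssRun m φ execute n I s i = ssRun m φ execute n J s i := by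
  intro n
  induction n with
  | zero => intro I J s i; rfl
  | succ n ih =>
    intro I J s i
    unfold ssRun
    cases hl : φ s with
    | none => rfl
    | some l =>
      simp only
      by_cases h : ∃ v ∈ m.p l, i ∈ v.I
      · rw [dif_pos h, dif_pos h, ih]
      · rw [dif_neg h, dif_neg h]

lemma accRun_indep (m : MutModel L C ID) (φ : S → Option L) (execute : S → C → S)
    (rep : Finset ID → ID) (hrep : ∀ K : Finset ID, K.Nonempty → rep K ∈ K) :
    ∀ (n : ℕ) (I J : Finset ID) (s : S) (i : ID), i ∈ I → i ∈ J →
      accRun m φ execute rep n I s i = accRun m φ execute rep n J s i := by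
  intro n
  induction n with
  | zero => intro I J s i _ _; rfl
  | succ n ih =>
    intro I J s i hI hJ
    unfold accRun
    cases hl : φ s with
    | none => rfl
    | some l =>
      simp only
      have hmemI : i ∈ I.filter fun j => step m φ execute j s = step m φ execute i s :=
        Finset.mem_filter.2 ⟨hI, rfl⟩
      have hmemJ : i ∈ J.filter fun j => step m φ execute j s = step m φ execute i s :=
        Finset.mem_filter.2 ⟨hJ, rfl⟩
      have h1 : step m φ execute
          (rep (I.filter fun j => step m φ execute j s = step m φ execute i s)) s
          = step m φ execute i s :=
        (Finset.mem_filter.1 (hrep _ ⟨i, hmemI⟩)).2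
      have h2 : step m φ execute
          (rep (J.filter fun j => step m φ execute j s = step m φ execute i s)) s
          = step m φ execute i s :=
        (Finset.mem_filter.1 (hrep _ ⟨i, hmemJ⟩)).2
      rw [h1, h2]
      exact ih _ _ _ _ hmemI hmemJ

/-- Equivalence of AccMut and split-stream execution (Theorem 1): for every fuel
bound `n`, every `I ⊆ M`, every `i ∈ I` and every state `s`, the AccMut run and
the split-stream run record the same final state for mutant `i`. -/
theorem stmt9 (m : MutModel L C ID) (φ : S → Option L) (execute : S → C → S)
    (rep : Finset ID → ID) (hrep : ∀ K : Finset ID, K.Nonempty → rep K ∈ K) :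
    ∀ (n : ℕ) (I : Finset ID), I ⊆ m.M → ∀ i ∈ I, ∀ s : S,
      accRun m φ execute rep n I s i = ssRun m φ execute n I s i := by
  intro n
  induction n with
  | zero => intro I _ i _ s; rfl
  | succ n ih =>
    intro I hIM i hiI s
    unfold accRun ssRun
    cases hl : φ s with
    | none => rfl
    | some l =>
      simp only
      have hiM : i ∈ m.M := hIM hiI
      have h : ∃ v ∈ m.p l, i ∈ v.I := by
        have := m.cover l
        rw [← this] at hiM
        rcases Finset.mem_biUnion.1 hiM with ⟨v, hv, hiv⟩
        exact ⟨v, hv, hiv⟩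
      rw [dif_pos h]
      have hstep : step m φ execute i s = execute s h.choose.code := by
        unfold step
        rw [hl]
        simp only
        rw [dif_pos h]
      set K := I.filter fun j => step m φ execute j s = step m φ execute i s with hK
      have hmemK : i ∈ K := Finset.mem_filter.2 ⟨hiI, rfl⟩
      have h1 : step m φ execute (rep K) s = step m φ execute i s :=
        (Finset.mem_filter.1 (hrep _ ⟨i, hmemK⟩)).2
      rw [h1, hstep]
      have hKM : K ⊆ m.M := fun j hj => hIM (Finset.mem_filter.1 hj).1
      rw [ih K hKM i hmemK]
      exact ssRun_indep m φ execute n K _ _ i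

end Runs
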